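/- If a function F : E → ℝ is negative definite (F x ≤ 0 with equality iff x = 0), concave on a real normed vector space E (finite-dimensional), and F(x_t) → 0 along a sequence x_t, then x_t → 0. -/

import Mathlib

theorem stmt_16 {E : Type*} [NormedAddCommGroup E] [NormedSpace ℝ E]
    [FiniteDimensional ℝ E]
    (F : E → ℝ) (hconc : ConcaveOn ℝ Set.univ F)
    (hF0 : F 0 = 0) (hFneg : ∀ x : E, x ≠ 0 → F x < 0)
    (x : ℕ → E)
    (hFx : Filter.Tendsto (fun t => F (x t)) Filter.atTop (nhds 0)) :
    Filter.Tendsto x Filter.atTop (nhds 0) := by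
  rcases subsingleton_or_nontrivial E with hs | hn
  · have : ∀ t, x t = 0 := fun t => Subsingleton.elim _ _
    simpa [this] using tendsto_const_nhds
  have hFle : ∀ y : E, F y ≤ 0 := by
    intro y
    rcases eq_or_ne y 0 with rfl | h
    · exact le_of_eq hF0
    · exact (hFneg y h).le
  have hcont : Continuous F := by
    have := hconc.continuousOn isOpen_univ
    rwa [← continuousOn_univ]
  rw [NormedAddCommGroup.tendsto_nhds_zero]
  intro ε hε
  -- sphere of radius ε is nonempty and compact
  obtain ⟨v, hv⟩ := exists_ne (0 : E)
  have hsne : (Metric.sphere (0 : E) ε).Nonempty := by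
    refine ⟨(ε / ‖v‖) • v, ?_⟩
    have hv' : ‖v‖ ≠ 0 := norm_ne_zero_iff.mpr hv
    simp [norm_smul, abs_of_nonneg (div_nonneg hε.le (norm_nonneg v)),
      div_mul_cancel₀, hv', abs_of_nonneg hε.le]
  obtain ⟨z, hz, hzmax⟩ := (isCompact_sphere (0 : E) ε).exists_isMaxOn hsne
    (hcont.continuousOn)
  have hzne : z ≠ 0 := by
    intro h
    rw [h, Metric.mem_sphere, dist_self] at hz
    exact hε.ne hz
  set c : ℝ := -F z with hc
  have hcpos : 0 < c := by simp [hc, hFneg z hzne]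
  have hev : ∀ᶠ t in Filter.atTop, -c < F (x t) := by
    have := hFx (Ioi_mem_nhds (show -c < 0 by linarith))
    filter_upwards [this] with t ht
    exact ht
  filter_upwards [hev] with t ht
  by_contra hge
  push_neg at hge
  have hxpos : 0 < ‖x t‖ := lt_of_lt_of_le hε hge
  have hxt : ‖x t‖ ≠ 0 := ne_of_gt hxpos
  set θ : ℝ := ε / ‖x t‖ with hθ
  have hθ0 : 0 < θ := div_pos hε hxpos
  have hθ1 : θ ≤ 1 := (div_le_one hxpos).mpr hge
  have key := hconc.2 (Set.mem_univ (0 : E)) (Set.mem_univ (x t))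
    (by linarith : (0:ℝ) ≤ 1 - θ) hθ0.le (by ring)
  rw [hF0] at key
  simp only [smul_zero, zero_add, smul_eq_mul] at key
  have hmem : θ • x t ∈ Metric.sphere (0 : E) ε := by
    simp [norm_smul, hθ, abs_of_pos hθ0, div_mul_cancel₀, hxt, hε.le]
  have hle : F (θ • x t) ≤ F z := hzmax hmem
  have h1 : θ * F (x t) ≥ F (x t) := by
    nlinarith [hFle (x t)]
  linarith [key, hle, h1]
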